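/- (Unicity implies purity.) If ρ is a dark state and it is the unique one — i.e. every density matrix ρ' with L(ρ') = 0 and ρ' = Pρ'P equals ρ — then ρ is a pure state: ρ·ρ = ρ (equivalently, ρ has rank one). -/

import Mathlib

open Matrix Complex BigOperators ComplexOrder

/-- Projection onto the ground-state indices. -/
noncomputable def Pg (Ng Ne : ℕ) : Matrix (Fin Ng ⊕ Fin Ne) (Fin Ng ⊕ Fin Ne) ℂ :=
  Matrix.diagonal (Sum.elim (fun _ => 1) (fun _ => 0))

/-- Projection onto the excited-state indices. -/
noncomputable def Qe (Ng Ne : ℕ) : Matrix (Fin Ng ⊕ Fin Ne) (Fin Ng ⊕ Fin Ne) ℂ :=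
  1 - Pg Ng Ne

/-- Jump operator |g_i⟩⟨e_j|. -/
noncomputable def jump (Ng Ne : ℕ) (i : Fin Ng) (j : Fin Ne) :
    Matrix (Fin Ng ⊕ Fin Ne) (Fin Ng ⊕ Fin Ne) ℂ :=
  Matrix.single (Sum.inl i) (Sum.inr j) 1

/-- Decay operator Γ = Σ γ_{ij} σ_{ij}ᴴ σ_{ij}. -/
noncomputable def Gam (Ng Ne : ℕ) (γ : Fin Ng → Fin Ne → ℝ) :
    Matrix (Fin Ng ⊕ Fin Ne) (Fin Ng ⊕ Fin Ne) ℂ :=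
  ∑ i, ∑ j, (γ i j : ℂ) • ((jump Ng Ne i j)ᴴ * jump Ng Ne i j)

/-- The Lindblad generator. -/
noncomputable def Lindblad (Ng Ne : ℕ) (H : Matrix (Fin Ng ⊕ Fin Ne) (Fin Ng ⊕ Fin Ne) ℂ)
    (γ : Fin Ng → Fin Ne → ℝ) (ρ : Matrix (Fin Ng ⊕ Fin Ne) (Fin Ng ⊕ Fin Ne) ℂ) :
    Matrix (Fin Ng ⊕ Fin Ne) (Fin Ng ⊕ Fin Ne) ℂ :=
  (-Complex.I) • (H * ρ - ρ * H) +
    ∑ i, ∑ j, (γ i j : ℂ) •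
      (jump Ng Ne i j * ρ * (jump Ng Ne i j)ᴴ -
        (1 / 2 : ℂ) • ((jump Ng Ne i j)ᴴ * jump Ng Ne i j * ρ +
          ρ * ((jump Ng Ne i j)ᴴ * jump Ng Ne i j)))

/-- A dark state: a density matrix annihilated by the Lindbladian and supported on the
ground-state subspace. -/
def IsDarkState (Ng Ne : ℕ) (H : Matrix (Fin Ng ⊕ Fin Ne) (Fin Ng ⊕ Fin Ne) ℂ)
    (γ : Fin Ng → Fin Ne → ℝ) (ρ : Matrix (Fin Ng ⊕ Fin Ne) (Fin Ng ⊕ Fin Ne) ℂ) : Prop :=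
  ρ.PosSemidef ∧ ρ.trace = 1 ∧ Lindblad Ng Ne H γ ρ = 0 ∧ ρ = Pg Ng Ne * ρ * Pg Ng Ne

set_option linter.unusedSectionVars false

section AuxLemmas

variable {N : Type*} [Fintype N] [DecidableEq N]

variable {N : Type*} [Fintype N] [DecidableEq N]

/-- diagonal entries of a PSD matrix are (real) nonneg. -/
lemma psd_diag_real {A : Matrix N N ℂ} (hA : A.PosSemidef) (k : N) :
    ∃ r : ℝ, 0 ≤ r ∧ A k k = (r : ℂ) := by
  have h := hA.dotProduct_mulVec_nonneg (Pi.single k 1)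
  have hq : star (Pi.single k (1:ℂ)) ⬝ᵥ A *ᵥ Pi.single k 1 = A k k := by
    simp [dotProduct, Matrix.mulVec, Pi.single_apply, apply_ite star]
  rw [hq] at h
  obtain ⟨h1, h2⟩ := Complex.nonneg_iff.mp h
  exact ⟨(A k k).re, h1, (Complex.ext (by simp) (by simp [← h2])).symm⟩

open scoped MatrixOrder in
lemma psd_exists_conjTranspose_mul {A : Matrix N N ℂ} (hA : A.PosSemidef) :
    ∃ B : Matrix N N ℂ, A = Bᴴ * B := by
  classical
  obtain ⟨X, hX, -, hXA⟩ := CFC.exists_sqrt_of_isSelfAdjoint_of_quasispectrumRestricts hA.isHermitian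
    (QuasispectrumRestricts.nnreal_of_nonneg hA.nonneg)
  exact ⟨X, by rw [← hXA]; exact congrArg (· * X) hX.star_eq.symm⟩

lemma psd_trace_real {A : Matrix N N ℂ} (hA : A.PosSemidef) :
    ∃ r : ℝ, 0 ≤ r ∧ A.trace = (r : ℂ) ∧ (A.trace = 0 → A = 0) := by
  obtain ⟨B, rfl⟩ := psd_exists_conjTranspose_mul hA
  refine ⟨∑ j, ∑ i, Complex.normSq (B i j), Finset.sum_nonneg fun j _ => Finset.sum_nonneg fun i _ => Complex.normSq_nonneg _, ?_, ?_⟩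
  · rw [Matrix.trace]
    push_cast
    refine Finset.sum_congr rfl fun j _ => ?_
    simp [Matrix.diag, Matrix.mul_apply, Complex.normSq_eq_conj_mul_self]
  · intro h
    rw [Matrix.conjTranspose_mul_self_eq_zero (A := B)]
    have htr : (∑ j, ∑ i, Complex.normSq (B i j) : ℝ) = 0 := by
      have : ((∑ j, ∑ i, Complex.normSq (B i j) : ℝ) : ℂ) = 0 := by
        rw [← h, Matrix.trace]
        push_cast
        refine (Finset.sum_congr rfl fun j _ => ?_).symm
        simp [Matrix.diag, Matrix.mul_apply, Complex.normSq_eq_conj_mul_self]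
      exact_mod_cast this
    have hz : ∀ j ∈ Finset.univ, ∀ i ∈ Finset.univ, Complex.normSq (B i j) = 0 := by
      intro j _ i _
      have h1 := (Finset.sum_eq_zero_iff_of_nonneg (fun j _ => Finset.sum_nonneg fun i _ => Complex.normSq_nonneg _)).mp htr j (Finset.mem_univ j)
      exact (Finset.sum_eq_zero_iff_of_nonneg (fun i _ => Complex.normSq_nonneg _)).mp h1 i (Finset.mem_univ i)
    ext i j
    simpa using Complex.normSq_eq_zero.mp (hz j (Finset.mem_univ j) i (Finset.mem_univ i))

lemma psd_smul_real {A : Matrix N N ℂ} (hA : A.PosSemidef) {r : ℝ} (hr : 0 ≤ r) :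
    ((r : ℂ) • A).PosSemidef := by
  refine Matrix.PosSemidef.of_dotProduct_mulVec_nonneg ?_ fun x => ?_
  · unfold Matrix.IsHermitian
    rw [Matrix.conjTranspose_smul, hA.1]
    congr 1
    simp
  · rw [Matrix.smul_mulVec, dotProduct_smul]
    have := hA.dotProduct_mulVec_nonneg x
    calc (0:ℂ) = (r:ℂ) * 0 := by ring
    _ ≤ (r:ℂ) * (star x ⬝ᵥ A *ᵥ x) := by
        apply mul_le_mul_of_nonneg_left this
        exact_mod_cast Complex.zero_le_real.mpr hr
    _ = (r:ℂ) • (star x ⬝ᵥ A *ᵥ x) := by simp [smul_eq_mul]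

end AuxLemmas

variable {Ng Ne : ℕ}

lemma Pg_mul_Pg : Pg Ng Ne * Pg Ng Ne = Pg Ng Ne := by
  ext a b
  rw [Pg, Matrix.diagonal_mul_diagonal]
  rcases a with a | a <;> rcases b with b | b <;>
    simp [Matrix.diagonal_apply, Sum.inl.injEq]

lemma supp_row {ρ' : Matrix (Fin Ng ⊕ Fin Ne) (Fin Ng ⊕ Fin Ne) ℂ}
    (hs : ρ' = Pg Ng Ne * ρ' * Pg Ng Ne) (j : Fin Ne) (b : Fin Ng ⊕ Fin Ne) :
    ρ' (Sum.inr j) b = 0 := by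
  conv_lhs => rw [hs]
  rw [Matrix.mul_apply]
  refine Finset.sum_eq_zero fun c _ => ?_
  rw [Pg, Matrix.diagonal_mul]
  simp

lemma supp_col {ρ' : Matrix (Fin Ng ⊕ Fin Ne) (Fin Ng ⊕ Fin Ne) ℂ}
    (hs : ρ' = Pg Ng Ne * ρ' * Pg Ng Ne) (j : Fin Ne) (a : Fin Ng ⊕ Fin Ne) :
    ρ' a (Sum.inr j) = 0 := by
  conv_lhs => rw [hs]
  rw [Pg, Matrix.mul_diagonal]
  simp

lemma std_mul_eq_zero {M : Matrix (Fin Ng ⊕ Fin Ne) (Fin Ng ⊕ Fin Ne) ℂ}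
    {r : Fin Ng ⊕ Fin Ne} (hM : ∀ b, M r b = 0) (a : Fin Ng ⊕ Fin Ne) :
    Matrix.single a r (1:ℂ) * M = 0 := by
  ext x y
  by_cases hx : x = a
  · subst hx
    rw [Matrix.single_mul_apply_same, hM]
    simp
  · simp [hx]

lemma mul_std_eq_zero {M : Matrix (Fin Ng ⊕ Fin Ne) (Fin Ng ⊕ Fin Ne) ℂ}
    {r : Fin Ng ⊕ Fin Ne} (hM : ∀ a, M a r = 0) (b : Fin Ng ⊕ Fin Ne) :
    M * Matrix.single r b (1:ℂ) = 0 := by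
  ext x y
  by_cases hy : y = b
  · subst hy
    rw [Matrix.mul_single_apply_same, hM]
    simp
  · simp [hy]

lemma jump_conjTranspose (i : Fin Ng) (j : Fin Ne) :
    (jump Ng Ne i j)ᴴ = Matrix.single (Sum.inr j) (Sum.inl i) (1:ℂ) := by
  ext a b
  simp only [jump, Matrix.conjTranspose_apply, Matrix.single, Matrix.of_apply]
  by_cases h1 : b = Sum.inl i <;> by_cases h2 : a = Sum.inr j <;>
    simp [h1, h2, eq_comm, and_comm]

lemma lindblad_of_supported (H : Matrix (Fin Ng ⊕ Fin Ne) (Fin Ng ⊕ Fin Ne) ℂ)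
    (γ : Fin Ng → Fin Ne → ℝ) {ρ' : Matrix (Fin Ng ⊕ Fin Ne) (Fin Ng ⊕ Fin Ne) ℂ}
    (hs : ρ' = Pg Ng Ne * ρ' * Pg Ng Ne) :
    Lindblad Ng Ne H γ ρ' = (-Complex.I) • (H * ρ' - ρ' * H) := by
  rw [Lindblad, add_eq_left]
  refine Finset.sum_eq_zero fun i _ => Finset.sum_eq_zero fun j _ => ?_
  have h1 : jump Ng Ne i j * ρ' = 0 := by
    rw [jump]
    exact std_mul_eq_zero (supp_row hs j) _
  have h2 : (jump Ng Ne i j)ᴴ * jump Ng Ne i j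
      = Matrix.single (Sum.inr j) (Sum.inr j) (1:ℂ) := by
    rw [jump_conjTranspose, jump, Matrix.single_mul_single_same, one_mul]
  have h3 : (jump Ng Ne i j)ᴴ * jump Ng Ne i j * ρ' = 0 := by
    rw [h2]; exact std_mul_eq_zero (supp_row hs j) _
  have h4 : ρ' * ((jump Ng Ne i j)ᴴ * jump Ng Ne i j) = 0 := by
    rw [h2]; exact mul_std_eq_zero (supp_col hs j) _
  rw [h1, h3, h4]
  simp

lemma supp_of {X : Matrix (Fin Ng ⊕ Fin Ne) (Fin Ng ⊕ Fin Ne) ℂ}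
    (h1 : Pg Ng Ne * X = X) (h2 : X * Pg Ng Ne = X) : X = Pg Ng Ne * X * Pg Ng Ne := by
  rw [h1, h2]

set_option maxHeartbeats 2000000 in
theorem unique_dark_state_is_pure
    (Ng Ne : ℕ) (hNg : 1 ≤ Ng) (hNe : 1 ≤ Ne)
    (H : Matrix (Fin Ng ⊕ Fin Ne) (Fin Ng ⊕ Fin Ne) ℂ) (hH : H.IsHermitian)
    (γ : Fin Ng → Fin Ne → ℝ) (hγ : ∀ i j, 0 ≤ γ i j)
    (hγpos : ∀ j, 0 < ∑ i, γ i j)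
    (ρ : Matrix (Fin Ng ⊕ Fin Ne) (Fin Ng ⊕ Fin Ne) ℂ)
    (hdark : IsDarkState Ng Ne H γ ρ)
    (huniq : ∀ ρ' : Matrix (Fin Ng ⊕ Fin Ne) (Fin Ng ⊕ Fin Ne) ℂ,
      IsDarkState Ng Ne H γ ρ' → ρ' = ρ) :
    ρ * ρ = ρ := by
  obtain ⟨hpsd, htr, hL, hs⟩ := hdark
  have hcomm : H * ρ = ρ * H := by
    rw [lindblad_of_supported H γ hs] at hL
    rcases smul_eq_zero.mp hL with h | h
    · exact absurd h (by simp [Complex.I_ne_zero])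
    · exact sub_eq_zero.mp h
  have hherm : ρᴴ = ρ := hpsd.1
  have hPρ : Pg Ng Ne * ρ = ρ := by
    nth_rewrite 1 [hs]
    rw [← Matrix.mul_assoc, ← Matrix.mul_assoc, Pg_mul_Pg, ← hs]
  have hρP : ρ * Pg Ng Ne = ρ := by
    nth_rewrite 1 [hs]
    rw [Matrix.mul_assoc, Pg_mul_Pg, ← hs]
  -- key lemma: any PSD matrix commuting with H, supported on ground space, with trace r>0
  -- is r • ρ
  have key : ∀ σ : Matrix (Fin Ng ⊕ Fin Ne) (Fin Ng ⊕ Fin Ne) ℂ, σ.PosSemidef →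
      H * σ = σ * H → Pg Ng Ne * σ = σ → σ * Pg Ng Ne = σ →
      ∀ r : ℝ, 0 < r → σ.trace = (r : ℂ) → σ = (r : ℂ) • ρ := by
    intro σ hσpsd hσH hσ1 hσ2 r hr hσtr
    have hsupp' : (((r:ℝ)⁻¹ : ℝ) : ℂ) • σ
        = Pg Ng Ne * ((((r:ℝ)⁻¹ : ℝ) : ℂ) • σ) * Pg Ng Ne := by
      rw [Matrix.mul_smul, Matrix.smul_mul, hσ1, hσ2]
    have hdark' : IsDarkState Ng Ne H γ ((((r:ℝ)⁻¹ : ℝ) : ℂ) • σ) := by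
      refine ⟨psd_smul_real hσpsd (inv_nonneg.mpr hr.le), ?_, ?_, hsupp'⟩
      · rw [Matrix.trace_smul, hσtr, smul_eq_mul]
        push_cast
        field_simp
      · rw [lindblad_of_supported H γ hsupp']
        rw [Matrix.mul_smul, Matrix.smul_mul, hσH]
        simp
    have := huniq _ hdark'
    have h2 : (r : ℂ) • ((((r:ℝ)⁻¹ : ℝ) : ℂ) • σ) = (r : ℂ) • ρ := by rw [this]
    rw [smul_smul] at h2
    rw [← h2]
    have : (r : ℂ) * (((r:ℝ)⁻¹ : ℝ) : ℂ) = 1 := by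
      push_cast
      field_simp
    rw [this, one_smul]
  -- ρ² = t • ρ
  have hρn0 : ρ ≠ 0 := fun h => by simp [h] at htr
  have hpsd2 : (ρ * ρ).PosSemidef := by
    nth_rewrite 1 [← hherm]
    exact Matrix.posSemidef_conjTranspose_mul_self ρ
  obtain ⟨t, ht0, htt, htz⟩ := psd_trace_real hpsd2
  have htpos : 0 < t := by
    rcases ht0.lt_or_eq with h | h
    · exact h
    · exfalso
      apply hρn0
      have : ρ * ρ = 0 := htz (by rw [htt, ← h]; simp)
      nth_rewrite 1 [← hherm] at this
      exact Matrix.conjTranspose_mul_self_eq_zero.mp this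
  have hsq : ρ * ρ = (t : ℂ) • ρ := by
    refine key _ hpsd2 ?_ ?_ ?_ t htpos htt
    · rw [← Matrix.mul_assoc, hcomm, Matrix.mul_assoc, hcomm, ← Matrix.mul_assoc]
    · rw [← Matrix.mul_assoc, hPρ]
    · rw [Matrix.mul_assoc, hρP]
  -- the normalized projection Pp
  have hc0 : ((t:ℝ):ℂ) ≠ 0 := Complex.ofReal_ne_zero.mpr htpos.ne'
  obtain ⟨Pp, hPpdef⟩ : ∃ X : Matrix (Fin Ng ⊕ Fin Ne) (Fin Ng ⊕ Fin Ne) ℂ,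
      X = ((t:ℝ):ℂ)⁻¹ • ρ := ⟨_, rfl⟩
  have hcast : (((t:ℝ):ℂ))⁻¹ = (((t⁻¹:ℝ)):ℂ) := by push_cast; ring
  have hPp2 : Pp * Pp = Pp := by
    rw [hPpdef, Matrix.smul_mul, Matrix.mul_smul, hsq, smul_smul, smul_smul]
    congr 1
    field_simp
  have hρPp : ρ = ((t:ℝ):ℂ) • Pp := by
    rw [hPpdef, smul_smul, mul_inv_cancel₀ hc0, one_smul]
  have hPph : Ppᴴ = Pp := by
    rw [hPpdef, Matrix.conjTranspose_smul, hherm, hcast]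
    congr 1
    simp [Complex.conj_ofReal]
  have hHPp : H * Pp = Pp * H := by
    rw [hPpdef, Matrix.mul_smul, Matrix.smul_mul, hcomm]
  have hPPp : Pg Ng Ne * Pp = Pp := by rw [hPpdef, Matrix.mul_smul, hPρ]
  have hPpP : Pp * Pg Ng Ne = Pp := by rw [hPpdef, Matrix.smul_mul, hρP]
  have hPppsd : Pp.PosSemidef := by
    rw [hPpdef, hcast]
    exact psd_smul_real hpsd (inv_nonneg.mpr htpos.le)
  -- the compressed Hamiltonian B = Pp H Pp
  obtain ⟨B, hBdef⟩ : ∃ X : Matrix (Fin Ng ⊕ Fin Ne) (Fin Ng ⊕ Fin Ne) ℂ,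
      X = Pp * H * Pp := ⟨_, rfl⟩
  have hBh : Bᴴ = B := by
    rw [hBdef]
    simp [Matrix.conjTranspose_mul, hPph, hH.eq, Matrix.mul_assoc]
  have cPp : Commute H Pp := hHPp
  have cB : Commute H B := by
    rw [hBdef]
    exact (cPp.mul_right (Commute.refl H)).mul_right cPp
  have hBPp : B * Pp = B := by rw [hBdef, Matrix.mul_assoc (Pp * H) Pp Pp, hPp2]
  have hPpB : Pp * B = B := by rw [hBdef, ← Matrix.mul_assoc, ← Matrix.mul_assoc, hPp2]
  have hPB : Pg Ng Ne * B = B := by rw [hBdef, ← Matrix.mul_assoc, ← Matrix.mul_assoc, hPPp]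
  have hBP : B * Pg Ng Ne = B := by rw [hBdef, Matrix.mul_assoc (Pp * H) Pp _, hPpP]
  have hBBpsd : (B * B).PosSemidef := by
    nth_rewrite 1 [← hBh]
    exact Matrix.posSemidef_conjTranspose_mul_self B
  obtain ⟨t₂, ht₂0, htr₂, htz₂⟩ := psd_trace_real hBBpsd
  -- B is a scalar multiple of Pp
  have hβ : ∃ β : ℂ, B = β • Pp := by
    rcases ht₂0.lt_or_eq with h2 | h2
    · have hBB : B * B = ((t₂:ℝ):ℂ) • ρ := by
        refine key _ hBBpsd (cB.mul_right cB).eq ?_ ?_ t₂ h2 htr₂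
        · rw [← Matrix.mul_assoc, hPB]
        · rw [Matrix.mul_assoc, hBP]
      have hBB' : B * B = (((t₂:ℝ):ℂ) * ((t:ℝ):ℂ)) • Pp := by
        rw [hBB, hρPp, smul_smul]
      obtain ⟨d, hddef⟩ : ∃ x : ℝ, x = Real.sqrt (t₂ * t) := ⟨_, rfl⟩
      have hdpos : 0 < d := hddef ▸ Real.sqrt_pos.mpr (mul_pos h2 htpos)
      have hd2 : ((d:ℝ):ℂ) * ((d:ℝ):ℂ) = ((t₂:ℝ):ℂ) * ((t:ℝ):ℂ) := by
        rw [hddef, ← Complex.ofReal_mul, Real.mul_self_sqrt (mul_pos h2 htpos).le]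
        push_cast
        ring
      obtain ⟨C, hCdef⟩ : ∃ X : Matrix (Fin Ng ⊕ Fin Ne) (Fin Ng ⊕ Fin Ne) ℂ,
          X = B + ((d:ℝ):ℂ) • Pp := ⟨_, rfl⟩
      have hC2 : C * C = (2 * ((d:ℝ):ℂ)) • C := by
        rw [hCdef, add_mul, mul_add, mul_add, Matrix.mul_smul, Matrix.smul_mul,
          Matrix.smul_mul, Matrix.mul_smul, hBB', ← hd2, hBPp, hPpB, hPp2]
        module
      have hCh : Cᴴ = C := by
        rw [hCdef, Matrix.conjTranspose_add, hBh, Matrix.conjTranspose_smul, hPph]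
        congr 2
        simp [Complex.conj_ofReal]
      have h2d0 : (2 * ((d:ℝ):ℂ)) ≠ 0 := by
        have : (2 * ((d:ℝ):ℂ)) = (((2*d:ℝ)):ℂ) := by push_cast; ring
        rw [this]
        exact Complex.ofReal_ne_zero.mpr (by positivity)
      obtain ⟨E, hEdef⟩ : ∃ X : Matrix (Fin Ng ⊕ Fin Ne) (Fin Ng ⊕ Fin Ne) ℂ,
          X = (2 * ((d:ℝ):ℂ))⁻¹ • C := ⟨_, rfl⟩
      have hE2 : E * E = E := by
        rw [hEdef, Matrix.smul_mul, Matrix.mul_smul, hC2, smul_smul, smul_smul]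
        congr 1
        field_simp
      have hEh : Eᴴ = E := by
        rw [hEdef, Matrix.conjTranspose_smul, hCh]
        congr 1
        have : (2 * ((d:ℝ):ℂ))⁻¹ = (((2*d)⁻¹:ℝ):ℂ) := by push_cast; ring
        rw [this]
        simp [Complex.conj_ofReal]
      have hEpsd : E.PosSemidef := by
        have := Matrix.posSemidef_conjTranspose_mul_self E
        rwa [hEh, hE2] at this
      have hPC : Pg Ng Ne * C = C := by rw [hCdef, mul_add, Matrix.mul_smul, hPB, hPPp]
      have hCP : C * Pg Ng Ne = C := by rw [hCdef, add_mul, Matrix.smul_mul, hBP, hPpP]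
      have hHC : H * C = C * H := by
        rw [hCdef, mul_add, add_mul, Matrix.mul_smul, Matrix.smul_mul, cB.eq, hHPp]
      have hPE : Pg Ng Ne * E = E := by rw [hEdef, Matrix.mul_smul, hPC]
      have hEP : E * Pg Ng Ne = E := by rw [hEdef, Matrix.smul_mul, hCP]
      have hHE : H * E = E * H := by rw [hEdef, Matrix.mul_smul, Matrix.smul_mul, hHC]
      obtain ⟨s, hs0, hstr, hsz⟩ := psd_trace_real hEpsd
      have hCE : C = (2 * ((d:ℝ):ℂ)) • E := by
        rw [hEdef, smul_smul, mul_inv_cancel₀ h2d0, one_smul]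
      rcases hs0.lt_or_eq with hspos | hs0'
      · have hEρ : E = ((s:ℝ):ℂ) • ρ := key _ hEpsd hHE hPE hEP s hspos hstr
        refine ⟨2 * ((d:ℝ):ℂ) * ((s:ℝ):ℂ) * ((t:ℝ):ℂ) - ((d:ℝ):ℂ), ?_⟩
        have hBC : B = C - ((d:ℝ):ℂ) • Pp := by rw [hCdef]; abel
        rw [hBC, hCE, hEρ, hρPp, smul_smul, smul_smul]
        module
      · have hE0 : E = 0 := hsz (by rw [hstr, ← hs0']; simp)
        have hC0 : C = 0 := by
          rw [hEdef] at hE0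
          rcases smul_eq_zero.mp hE0 with h | h
          · exact absurd h (inv_ne_zero h2d0)
          · exact h
        refine ⟨-((d:ℝ):ℂ), ?_⟩
        rw [hCdef] at hC0
        rw [neg_smul]
        exact eq_neg_of_add_eq_zero_left hC0
    · have hBB0 : B * B = 0 := htz₂ (by rw [htr₂, ← h2]; simp)
      have hB0 : B = 0 := by
        nth_rewrite 1 [← hBh] at hBB0
        exact Matrix.conjTranspose_mul_self_eq_zero.mp hBB0
      exact ⟨0, by simp [hB0]⟩
  obtain ⟨β, hBβ⟩ := hβ
  have hHPpβ : H * Pp = β • Pp := by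
    calc H * Pp = H * (Pp * Pp) := by rw [hPp2]
    _ = (Pp * H) * Pp := by rw [← Matrix.mul_assoc, hHPp]
    _ = β • Pp := by rw [← hBdef, hBβ]
  have hPpHβ : Pp * H = β • Pp := by
    calc Pp * H = (Pp * Pp) * H := by rw [hPp2]
    _ = Pp * (H * Pp) := by rw [Matrix.mul_assoc, hHPp]
    _ = β • Pp := by rw [← Matrix.mul_assoc, ← hBdef, hBβ]
  -- pick a nonzero diagonal entry of ρ
  have hkex : ∃ k, ρ k k ≠ 0 := by
    by_contra h
    push_neg at h
    have : ρ.trace = 0 := by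
      rw [Matrix.trace]
      exact Finset.sum_eq_zero fun k _ => h k
    rw [this] at htr
    exact one_ne_zero htr.symm
  obtain ⟨k, hk⟩ := hkex
  obtain ⟨rk, hrk0, hrkeq⟩ := psd_diag_real hpsd k
  have hrkpos : 0 < rk := hrk0.lt_of_ne fun h => hk (by rw [hrkeq, ← h]; simp)
  obtain ⟨p, hpdef⟩ : ∃ x : ℝ, x = t⁻¹ * rk := ⟨_, rfl⟩
  have hppos : 0 < p := hpdef ▸ mul_pos (inv_pos.mpr htpos) hrkpos
  have hPpkk : Pp k k = ((p:ℝ):ℂ) := by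
    rw [hPpdef, Matrix.smul_apply, hrkeq, smul_eq_mul, hpdef]
    push_cast
    ring
  obtain ⟨Ek, hEkdef⟩ : ∃ X : Matrix (Fin Ng ⊕ Fin Ne) (Fin Ng ⊕ Fin Ne) ℂ,
      X = Matrix.single k k 1 := ⟨_, rfl⟩
  have hEkh : Ekᴴ = Ek := by
    ext a b
    simp only [hEkdef, Matrix.conjTranspose_apply, Matrix.single, Matrix.of_apply,
      apply_ite (star : ℂ → ℂ), star_one, star_zero]
    by_cases h1 : k = a <;> by_cases h2 : k = b <;> simp [h1, h2]
  have hEk2 : Ek * Ek = Ek := by rw [hEkdef, Matrix.single_mul_single_same, one_mul]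
  obtain ⟨S, hSdef⟩ : ∃ X : Matrix (Fin Ng ⊕ Fin Ne) (Fin Ng ⊕ Fin Ne) ℂ,
      X = Pp * Ek * Pp := ⟨_, rfl⟩
  have hSpsd : S.PosSemidef := by
    have hEkpsd : Ek.PosSemidef := by
      have := Matrix.posSemidef_conjTranspose_mul_self Ek
      rwa [hEkh, hEk2] at this
    rw [hSdef]
    have := hEkpsd.mul_mul_conjTranspose_same Pp
    rwa [hPph] at this
  have hHSβ : H * S = β • S := by
    rw [hSdef, ← Matrix.mul_assoc, ← Matrix.mul_assoc, hHPpβ, Matrix.smul_mul,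
      Matrix.smul_mul]
  have hSHβ : S * H = β • S := by
    rw [hSdef, Matrix.mul_assoc (Pp * Ek) Pp H, hPpHβ, Matrix.mul_smul]
  have hHS : H * S = S * H := by rw [hHSβ, hSHβ]
  have hPS : Pg Ng Ne * S = S := by
    rw [hSdef, ← Matrix.mul_assoc, ← Matrix.mul_assoc, hPPp]
  have hSP : S * Pg Ng Ne = S := by rw [hSdef, Matrix.mul_assoc (Pp * Ek) Pp _, hPpP]
  have htrS : S.trace = ((p:ℝ):ℂ) := by
    rw [hSdef, Matrix.trace_mul_cycle, hPp2, Matrix.trace]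
    rw [Finset.sum_eq_single k]
    · rw [Matrix.diag_apply, hEkdef, Matrix.mul_single_apply_same, mul_one,
        hPpkk]
    · intro b _ hb
      rw [Matrix.diag_apply, hEkdef, Matrix.mul_single_apply_of_ne (hbj := hb)]
    · intro h
      exact absurd (Finset.mem_univ k) h
  have hSρ : S = ((p:ℝ):ℂ) • ρ := key _ hSpsd hHS hPS hSP p hppos htrS
  have hmid : Ek * Pp * Ek = ((p:ℝ):ℂ) • Ek := by
    rw [hEkdef]
    ext a b
    by_cases ha : a = k <;> by_cases hb : b = k <;>
      simp [Matrix.mul_apply, Matrix.single, ite_and, hPpkk, ha, hb] <;> split_ifs <;> rfl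
  have hSS : S * S = ((p:ℝ):ℂ) • S := by
    rw [hSdef]
    calc (Pp * Ek * Pp) * (Pp * Ek * Pp) = Pp * Ek * (Pp * Pp) * Ek * Pp := by
          simp only [Matrix.mul_assoc]
    _ = Pp * (Ek * Pp * Ek) * Pp := by rw [hPp2]; simp only [Matrix.mul_assoc]
    _ = ((p:ℝ):ℂ) • (Pp * Ek * Pp) := by
          rw [hmid, Matrix.mul_smul, Matrix.smul_mul]
  have h1 : S * S = (((p:ℝ):ℂ) * ((p:ℝ):ℂ)) • (ρ * ρ) := by
    rw [hSρ, Matrix.smul_mul, Matrix.mul_smul, smul_smul]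
  have h2 : S * S = (((p:ℝ):ℂ) * ((p:ℝ):ℂ)) • ρ := by
    rw [hSS, hSρ, smul_smul]
  have hp0 : (((p:ℝ):ℂ) * ((p:ℝ):ℂ)) ≠ 0 :=
    mul_ne_zero (Complex.ofReal_ne_zero.mpr hppos.ne') (Complex.ofReal_ne_zero.mpr hppos.ne')
  exact smul_right_injective _ hp0 (h1.symm.trans h2)
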